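/- For the function Φ(x) = (x/2)·sin(x) − 2·sin²(x/2), there holds |Φ(x)| ≤ (1/24)(π + 1)|x|⁴ for all real x with |x| ≤ π. -/

import Mathlib

open Real

private lemma aux_nonneg (f g : ℝ → ℝ) (hd : ∀ y : ℝ, HasDerivAt f (g y) y)
    (hg : ∀ y : ℝ, 0 ≤ y → 0 ≤ g y) (h0 : f 0 = 0) {x : ℝ} (hx : 0 ≤ x) : 0 ≤ f x := by
  have hmono : MonotoneOn f (Set.Ici (0:ℝ)) := by
    apply monotoneOn_of_deriv_nonneg (convex_Ici 0)
      (fun y _ => (hd y).continuousAt.continuousWithinAt)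
      (fun y _ => (hd y).differentiableAt.differentiableWithinAt)
    intro y hy
    rw [(hd y).deriv]
    rw [interior_Ici] at hy
    exact hg y (le_of_lt hy)
  have := hmono (Set.self_mem_Ici) (Set.mem_Ici.2 hx) hx
  rwa [h0] at this

private lemma sin_abs_bound {y : ℝ} (hy : 0 ≤ y) : -y ≤ Real.sin y ∧ Real.sin y ≤ y := by
  have h := Real.abs_sin_le_abs (x := y)
  rw [abs_of_nonneg hy] at h
  exact ⟨(abs_le.1 h).1, (abs_le.1 h).2⟩

private lemma hF1 (y : ℝ) :
    HasDerivAt (fun t : ℝ => t / 2 * Real.sin t + Real.cos t - 1)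
      (y / 2 * Real.cos y - 1 / 2 * Real.sin y) y := by
  have h := ((((hasDerivAt_id y).div_const 2).mul (Real.hasDerivAt_sin y)).add
    (Real.hasDerivAt_cos y)).sub_const 1
  simp only [id_eq] at h
  refine h.congr_deriv ?_
  ring

private lemma hF2 (y : ℝ) :
    HasDerivAt (fun t : ℝ => t / 2 * Real.cos t - 1 / 2 * Real.sin t)
      (-(y / 2 * Real.sin y)) y := by
  have h := (((hasDerivAt_id y).div_const 2).mul (Real.hasDerivAt_cos y)).sub
    ((Real.hasDerivAt_sin y).const_mul (1 / 2))
  simp only [id_eq] at h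
  refine h.congr_deriv ?_
  ring

private lemma key_bound {x : ℝ} (hx : 0 ≤ x) :
    |x / 2 * Real.sin x + Real.cos x - 1| ≤ x ^ 4 / 24 := by
  -- f1 = y^3/6 - F1 ≥ 0 on [0, ∞)
  have h1 : ∀ y : ℝ, 0 ≤ y →
      0 ≤ y ^ 3 / 6 - (y / 2 * Real.cos y - 1 / 2 * Real.sin y) := by
    intro y hy
    refine aux_nonneg (fun t => t ^ 3 / 6 - (t / 2 * Real.cos t - 1 / 2 * Real.sin t))
      (fun t => t ^ 2 / 2 - (-(t / 2 * Real.sin t))) (fun t => ?_) (fun t ht => ?_) (by norm_num) hy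
    · have h := ((hasDerivAt_pow 3 t).div_const 6).sub (hF2 t)
      refine h.congr_deriv ?_; ring
    · obtain ⟨hl, _⟩ := sin_abs_bound ht
      nlinarith
  have h2 : ∀ y : ℝ, 0 ≤ y →
      0 ≤ y ^ 3 / 6 + (y / 2 * Real.cos y - 1 / 2 * Real.sin y) := by
    intro y hy
    refine aux_nonneg (fun t => t ^ 3 / 6 + (t / 2 * Real.cos t - 1 / 2 * Real.sin t))
      (fun t => t ^ 2 / 2 + -(t / 2 * Real.sin t)) (fun t => ?_) (fun t ht => ?_) (by norm_num) hy
    · have h := ((hasDerivAt_pow 3 t).div_const 6).add (hF2 t)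
      refine h.congr_deriv ?_; ring
    · obtain ⟨_, hu⟩ := sin_abs_bound ht
      nlinarith
  have h3 : 0 ≤ x ^ 4 / 24 - (x / 2 * Real.sin x + Real.cos x - 1) := by
    refine aux_nonneg (fun t => t ^ 4 / 24 - (t / 2 * Real.sin t + Real.cos t - 1))
      (fun t => t ^ 3 / 6 - (t / 2 * Real.cos t - 1 / 2 * Real.sin t))
      (fun t => ?_) h1 (by norm_num) hx
    have h := ((hasDerivAt_pow 4 t).div_const 24).sub (hF1 t)
    refine h.congr_deriv ?_; ring
  have h4 : 0 ≤ x ^ 4 / 24 + (x / 2 * Real.sin x + Real.cos x - 1) := by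
    refine aux_nonneg (fun t => t ^ 4 / 24 + (t / 2 * Real.sin t + Real.cos t - 1))
      (fun t => t ^ 3 / 6 + (t / 2 * Real.cos t - 1 / 2 * Real.sin t))
      (fun t => ?_) h2 (by norm_num) hx
    have h := ((hasDerivAt_pow 4 t).div_const 24).add (hF1 t)
    refine h.congr_deriv ?_; ring
  rw [abs_le]
  constructor <;> linarith

private lemma key_bound' (x : ℝ) :
    |x / 2 * Real.sin x + Real.cos x - 1| ≤ x ^ 4 / 24 := by
  rcases le_or_gt 0 x with hx | hx
  · exact key_bound hx
  · have h := key_bound (x := -x) (by linarith)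
    simp only [Real.sin_neg, Real.cos_neg] at h
    have he : -x / 2 * -Real.sin x = x / 2 * Real.sin x := by ring
    rw [he] at h
    calc |x / 2 * Real.sin x + Real.cos x - 1| ≤ (-x) ^ 4 / 24 := h
    _ = x ^ 4 / 24 := by ring

/-- For `Φ(x) = (x/2)·sin x − 2·sin²(x/2)`, one has
`|Φ(x)| ≤ (1/24)(π + 1)|x|⁴` for all real `x` with `|x| ≤ π`. -/
theorem abs_Phi_le (x : ℝ) (hx : |x| ≤ Real.pi) :
    |x / 2 * Real.sin x - 2 * Real.sin (x / 2) ^ 2| ≤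
      (1 / 24) * (Real.pi + 1) * |x| ^ 4 := by
  have hs : Real.sin (x / 2) ^ 2 = 1 / 2 - Real.cos x / 2 := by
    have := Real.sin_sq_eq_half_sub (x / 2)
    rwa [show 2 * (x / 2) = x by ring] at this
  have heq : x / 2 * Real.sin x - 2 * Real.sin (x / 2) ^ 2
      = x / 2 * Real.sin x + Real.cos x - 1 := by
    rw [hs]; ring
  rw [heq]
  have h := key_bound' x
  have hx4 : |x| ^ 4 = x ^ 4 := by
    rw [← abs_pow]
    exact abs_of_nonneg (by positivity)
  rw [hx4]
  have hpi : 0 < Real.pi := Real.pi_pos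
  nlinarith [pow_nonneg (abs_nonneg x) 4, hx4, abs_nonneg (x / 2 * Real.sin x + Real.cos x - 1)]
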